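/- Generalized q-binomial expansion in a quadratic algebra: let A, B be elements of an associative (unital) algebra satisfying BA = α AA + β AB + γ BB with α = ν(1-q)/(1-qν), β = (q-ν)/(1-qν), γ = (1-q)/(1-qν). Then with p = (μ-ν)/(1-ν), for every m ∈ ℕ, (pA + (1-p)B)^m = ∑_{j=0}^{m} φ_{q,μ,ν}(j|m) A^j B^{m-j}. -/

import Mathlib

noncomputable def qpR (a q : ℝ) (n : ℕ) : ℝ := ∏ i ∈ Finset.range n, (1 - a * q ^ i)

noncomputable def phi (q μ ν : ℝ) (j m : ℕ) : ℝ :=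
  μ ^ j * qpR (ν / μ) q j * qpR μ q (m - j) * qpR q q m
    / (qpR ν q m * qpR q q j * qpR q q (m - j))

noncomputable section S15aux
open Polynomial Finset

abbrev Rq := Polynomial ℝ

/-- Gaussian binomial polynomial in variable X (= q), by Pascal recursion. -/
def qbp : ℕ → ℕ → Rq
  | 0, 0 => 1
  | 0, _+1 => 0
  | _+1, 0 => 1
  | m+1, j+1 => qbp m j + X^(j+1) * qbp m (j+1)

@[simp] lemma qbp_zero_right (m : ℕ) : qbp m 0 = 1 := by cases m <;> rfl

lemma qbp_of_gt : ∀ {m j : ℕ}, m < j → qbp m j = 0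
  | 0, _+1, _ => rfl
  | m+1, j+1, h => by
    have h' : m < j := Nat.lt_of_succ_lt_succ h
    show qbp m j + X^(j+1) * qbp m (j+1) = 0
    rw [qbp_of_gt h', qbp_of_gt (Nat.lt_succ_of_lt h'), mul_zero, add_zero]

@[simp] lemma qbp_self : ∀ m : ℕ, qbp m m = 1
  | 0 => rfl
  | m+1 => by
    show qbp m m + X^(m+1) * qbp m (m+1) = 1
    rw [qbp_self m, qbp_of_gt (Nat.lt_succ_self m), mul_zero, add_zero]

/-- ratio lemma: (1 - X^(j+1)) qbp m (j+1) = (1 - X^(m-j)) qbp m j -/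
lemma qbp_ratio : ∀ m j : ℕ, (1 - X^(j+1)) * qbp m (j+1) = (1 - X^(m-j)) * qbp m j
  | 0, j => by
    rcases j with _|j
    · simp [qbp]
    · rw [show qbp 0 (j+1+1) = 0 from rfl, show qbp 0 (j+1) = 0 from rfl]
      ring
  | m+1, j => by
    rcases Nat.lt_or_ge j (m+1) with hj | hj
    · -- j ≤ m
      have hj' : j ≤ m := Nat.lt_succ_iff.mp hj
      rcases j with _|j
      · -- j = 0
        show (1 - X^1) * (qbp m 0 + X^1 * qbp m 1) = (1 - X^(m+1)) * qbp (m+1) 0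
        have h1 := qbp_ratio m 0
        simp only [qbp_zero_right, Nat.sub_zero] at h1 ⊢
        linear_combination X * h1
      · -- j = j'+1, j'+1 ≤ m
        have hlt : j < m := Nat.lt_of_succ_le hj'
        obtain ⟨d, hd⟩ : ∃ d, m = j + 1 + d := ⟨m - (j+1), by omega⟩
        have h1 := qbp_ratio m (j+1)
        have h2 := qbp_ratio m j
        show (1 - X^(j+2)) * (qbp m (j+1) + X^(j+2) * qbp m (j+2))
            = (1 - X^(m+1-(j+1))) * (qbp m j + X^(j+1) * qbp m (j+1))
        have e1 : m - (j+1) = d := by omega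
        have e2 : m - j = d + 1 := by omega
        have e3 : m + 1 - (j+1) = d + 1 := by omega
        rw [e1] at h1; rw [e2] at h2; rw [e3]
        linear_combination X^(j+2) * h1 + h2
    · -- j ≥ m+1 : both sides zero
      have e0 : m + 1 - j = 0 := by omega
      rw [e0, qbp_of_gt (show m+1 < j+1 by omega)]
      simp

end S15aux

noncomputable section S15main
open Polynomial Finset

lemma qbp_pascal2 (m j : ℕ) : qbp (m+1) (j+1) = X^(m-j) * qbp m j + qbp m (j+1) := by
  show qbp m j + X^(j+1) * qbp m (j+1) = _
  linear_combination -qbp_ratio m j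

abbrev Aq := Polynomial (Polynomial ℝ)

/-- linear factor 1 + c·t -/
def linf (c : Rq) : Aq := 1 + C c * X

def CCp (j : ℕ) : Aq := ∏ i ∈ range j, linf (X^i)
def DDp (ν : ℝ) (a n : ℕ) : Aq := ∏ i ∈ range n, linf (C ν * X^(a+i))
def QQp (μ : ℝ) (m : ℕ) : Aq := ∏ i ∈ range m, linf (C μ * X^i)
def aa (μ ν : ℝ) (j : ℕ) : Rq := ∏ i ∈ range j, (C μ - C ν * X^i)
def bb (μ : ℝ) (n : ℕ) : Rq := ∏ i ∈ range n, (1 - C μ * X^i)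

@[simp] lemma CCp_zero : CCp 0 = 1 := rfl
@[simp] lemma DDp_zero (ν : ℝ) (a : ℕ) : DDp ν a 0 = 1 := rfl
@[simp] lemma QQp_zero (μ : ℝ) : QQp μ 0 = 1 := rfl
@[simp] lemma aa_zero (μ ν : ℝ) : aa μ ν 0 = 1 := rfl
@[simp] lemma bb_zero (μ : ℝ) : bb μ 0 = 1 := rfl

lemma CCp_succ (j : ℕ) : CCp (j+1) = CCp j * linf (X^j) := prod_range_succ _ _
lemma QQp_succ (μ : ℝ) (m : ℕ) : QQp μ (m+1) = QQp μ m * linf (C μ * X^m) := prod_range_succ _ _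
lemma aa_succ (μ ν : ℝ) (j : ℕ) : aa μ ν (j+1) = aa μ ν j * (C μ - C ν * X^j) := prod_range_succ _ _
lemma bb_succ (μ : ℝ) (n : ℕ) : bb μ (n+1) = bb μ n * (1 - C μ * X^n) := prod_range_succ _ _
lemma DDp_succ (ν : ℝ) (a n : ℕ) : DDp ν a (n+1) = DDp ν a n * linf (C ν * X^(a+n)) := prod_range_succ _ _
lemma DDp_front (ν : ℝ) (a n : ℕ) : DDp ν a (n+1) = linf (C ν * X^a) * DDp ν (a+1) n := by
  rw [DDp, prod_range_succ', Nat.add_zero, mul_comm]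
  refine congrArg (HMul.hMul (linf (C ν * X ^ a))) ?_
  exact Finset.prod_congr rfl fun i _ => by rw [show a + (i+1) = a+1+i from by omega]

/-- telescoping certificate -/
def Gf (μ ν : ℝ) (m : ℕ) : ℕ → Aq
  | 0 => 0
  | j+1 => C (X^(m-j) * qbp m j * aa μ ν (j+1) * bb μ (m-j)) * (CCp (j+1) * DDp ν j (m-j))

lemma perj (μ ν : ℝ) (m : ℕ) : ∀ j, j ≤ m+1 →
    C (qbp (m+1) j * aa μ ν j * bb μ (m+1-j)) * (CCp j * DDp ν j (m+1-j))
    - linf (C μ * X^m) * (C ((1 - C ν * X^m) * (qbp m j * aa μ ν j * bb μ (m-j))) * (CCp j * DDp ν j (m-j)))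
    = Gf μ ν m j - Gf μ ν m (j+1) := by
  intro j hj
  rcases j with _|j
  · -- j = 0
    show _ = 0 - Gf μ ν m 1
    show _ = 0 - C (X^(m-0) * qbp m 0 * aa μ ν 1 * bb μ (m-0)) * (CCp 1 * DDp ν 0 (m-0))
    simp only [Nat.sub_zero, Nat.add_sub_cancel, qbp_zero_right, aa_zero, CCp_zero, aa_succ,
      bb_succ, DDp_succ, CCp_succ, Nat.zero_add, pow_zero, one_mul, mul_one, zero_sub]
    simp only [linf, map_mul, map_sub, map_one, map_pow]
    ring
  · rcases Nat.lt_or_ge j m with hlt | hge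
    · -- 1 ≤ j+1 ≤ m
      obtain ⟨d, hd⟩ : ∃ d, m = j + 1 + d := ⟨m - (j+1), by omega⟩
      subst hd
      have e1 : j + 1 + d + 1 - (j+1) = d+1 := by omega
      have e2 : j + 1 + d - (j+1) = d := by omega
      have e3 : j + 1 + d - j = d+1 := by omega
      show _ = C (X^(j+1+d-j) * qbp (j+1+d) j * aa μ ν (j+1) * bb μ (j+1+d-j)) * (CCp (j+1) * DDp ν j (j+1+d-j))
        - C (X^(j+1+d-(j+1)) * qbp (j+1+d) (j+1) * aa μ ν (j+2) * bb μ (j+1+d-(j+1))) * (CCp (j+2) * DDp ν (j+1) (j+1+d-(j+1)))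
      simp only [e1, e2, e3]
      have hrA := congrArg (fun r : Rq => (C r : Aq)) (qbp_ratio (j+1+d) j)
      simp only [e3, map_sub, map_mul, map_one, map_pow] at hrA
      rw [qbp_pascal2, e3]
      rw [show bb μ (d+1) = bb μ d * (1 - C μ * X^d) from bb_succ μ d,
        show DDp ν (j+1) (d+1) = DDp ν (j+1) d * linf (C ν * X^((j+1)+d)) from DDp_succ ν (j+1) d,
        show DDp ν j (d+1) = linf (C ν * X^j) * DDp ν (j+1) d from DDp_front ν j d,
        aa_succ μ ν (j+1), CCp_succ (j+1)]
      simp only [linf, map_mul, map_sub, map_one, map_pow, map_add]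
      linear_combination (C (aa μ ν (j+1)) * C (bb μ d) * CCp (j+1) * DDp ν (j+1) d *
        (C (C ν)) * (C (X:Rq))^(j+1+d) * (1 - C (C μ) * (C (X:Rq))^d) * X) * hrA
    · -- j+1 = m+1, i.e. j = m
      have hjm : j = m := by omega
      subst hjm
      show _ = C (X^(j-j) * qbp j j * aa μ ν (j+1) * bb μ (j-j)) * (CCp (j+1) * DDp ν j (j-j))
        - C (X^(j-(j+1)) * qbp j (j+1) * aa μ ν (j+2) * bb μ (j-(j+1))) * (CCp (j+2) * DDp ν (j+1) (j-(j+1)))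
      simp only [Nat.sub_self, Nat.add_sub_cancel_left, qbp_self, qbp_of_gt (Nat.lt_succ_self j),
        show j+1-(j+1) = 0 from Nat.sub_self (j+1), show j - (j+1) = 0 by omega,
        bb_zero, DDp_zero, pow_zero, one_mul, mul_one, map_zero, zero_mul, mul_zero, sub_zero]

theorem thm1 (μ ν : ℝ) : ∀ m, ∑ j ∈ range (m+1), C (qbp m j * aa μ ν j * bb μ (m-j)) * (CCp j * DDp ν j (m-j))
    = C (bb ν m) * QQp μ m := by
  intro m
  induction m with
  | zero => simp
  | succ m ih =>
    have tele : ∑ j ∈ range (m+2), (Gf μ ν m j - Gf μ ν m (j+1)) = 0 := by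
      rw [Finset.sum_range_sub' (Gf μ ν m)]
      have : Gf μ ν m (m+2) = 0 := by
        show C (X^(m-(m+1)) * qbp m (m+1) * _ * _) * _ = 0
        rw [qbp_of_gt (Nat.lt_succ_self m)]
        simp
      rw [this]
      simp [Gf]
    have split : ∑ j ∈ range (m+2), C (qbp (m+1) j * aa μ ν j * bb μ (m+1-j)) * (CCp j * DDp ν j (m+1-j))
        = ∑ j ∈ range (m+2), (Gf μ ν m j - Gf μ ν m (j+1))
          + ∑ j ∈ range (m+2), linf (C μ * X^m) * (C ((1 - C ν * X^m) * (qbp m j * aa μ ν j * bb μ (m-j))) * (CCp j * DDp ν j (m-j))) := by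
      rw [← Finset.sum_add_distrib]
      refine Finset.sum_congr rfl fun j hj => ?_
      have := perj μ ν m j (by simpa [Finset.mem_range, Nat.lt_succ_iff] using hj)
      linear_combination this
    rw [split, tele, zero_add]
    rw [Finset.sum_range_succ]
    rw [qbp_of_gt (Nat.lt_succ_self m)]
    simp only [zero_mul, mul_zero, map_zero, add_zero]
    calc ∑ j ∈ range (m+1), linf (C μ * X^m) * (C ((1 - C ν * X ^ m) * (qbp m j * aa μ ν j * bb μ (m - j))) * (CCp j * DDp ν j (m - j)))
        = linf (C μ * X^m) * (C (1 - C ν * X^m) * ∑ j ∈ range (m+1), C (qbp m j * aa μ ν j * bb μ (m-j)) * (CCp j * DDp ν j (m-j))) := by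
          rw [Finset.mul_sum, Finset.mul_sum]
          exact Finset.sum_congr rfl fun j _ => by rw [map_mul]; ring
      _ = C (bb ν (m+1)) * QQp μ (m+1) := by
          rw [ih, bb_succ, QQp_succ, map_mul]; ring

end S15main

noncomputable section S15bridge
open Polynomial Finset

def wseq : List Rq → ℕ → Rq
  | [], 0 => 1
  | [], _+1 => 0
  | _::xs, 0 => wseq xs 0
  | x::xs, k+1 => x * wseq xs k + X^(k+1) * wseq xs (k+1)

def PRD : ℕ → List Rq → Aq
  | _, [] => 1
  | a, x::xs => linf (x * X^a) * PRD (a+1) xs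

lemma coeff_linf_mul (c : Rq) (P : Aq) (k : ℕ) :
    (linf c * P).coeff (k+1) = P.coeff (k+1) + c * P.coeff k := by
  rw [linf, add_mul, one_mul, coeff_add, mul_assoc, coeff_C_mul, coeff_X_mul]

lemma coeff_linf_mul_zero (c : Rq) (P : Aq) :
    (linf c * P).coeff 0 = P.coeff 0 := by
  rw [linf, add_mul, one_mul, coeff_add, mul_assoc, coeff_C_mul, mul_coeff_zero]
  simp [coeff_X_zero]

lemma bridge : ∀ (xs : List Rq) (a k : ℕ),
    (PRD a xs).coeff k = X^(a*k + Nat.choose k 2) * wseq xs k := by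
  intro xs
  induction xs with
  | nil =>
    intro a k
    rcases k with _|k
    · simp [PRD, wseq]
    · simp [PRD, wseq, coeff_one]
  | cons x xs ih =>
    intro a k
    rcases k with _|k
    · rw [show PRD a (x::xs) = linf (x * X^a) * PRD (a+1) xs from rfl, coeff_linf_mul_zero, ih]
      simp [wseq]
    · rw [show PRD a (x::xs) = linf (x * X^a) * PRD (a+1) xs from rfl, coeff_linf_mul, ih, ih]
      have hch : Nat.choose (k+1) 2 = k + Nat.choose k 2 := by
        rw [Nat.choose_succ_succ, Nat.choose_one_right]
      rw [show wseq (x::xs) (k+1) = x * wseq xs k + X^(k+1) * wseq xs (k+1) from rfl]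
      rw [hch]
      have e1 : (a+1)*(k+1) + (k + Nat.choose k 2) = (a*(k+1) + (k + Nat.choose k 2)) + (k+1) := by ring
      have e2 : a + ((a+1)*k + Nat.choose k 2) = a*(k+1) + (k + Nat.choose k 2) := by ring
      rw [e1]
      calc X ^ (a * (k + 1) + (k + Nat.choose k 2) + (k + 1)) * wseq xs (k+1)
            + x * X ^ a * (X ^ ((a + 1) * k + Nat.choose k 2) * wseq xs k)
          = X ^ (a * (k + 1) + (k + Nat.choose k 2) + (k + 1)) * wseq xs (k+1)
            + x * X ^ (a + ((a+1)*k + Nat.choose k 2)) * wseq xs k := by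
            rw [pow_add]; ring
        _ = X ^ (a * (k + 1) + (k + Nat.choose k 2)) * (x * wseq xs k + X ^ (k + 1) * wseq xs (k + 1)) := by
            rw [e2, pow_add]; ring

lemma PRD_split : ∀ (xs ys : List Rq) (a : ℕ),
    PRD a (xs ++ ys) = PRD a xs * PRD (a + xs.length) ys := by
  intro xs
  induction xs with
  | nil => intro ys a; simp [PRD]
  | cons x xs ih =>
    intro ys a
    show linf (x * X^a) * PRD (a+1) (xs ++ ys) = linf (x * X^a) * PRD (a+1) xs * PRD (a + (xs.length + 1)) ys
    rw [ih, show a + (xs.length + 1) = (a+1) + xs.length from by omega, mul_assoc]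

lemma PRD_replicate (c : Rq) : ∀ (n a : ℕ),
    PRD a (List.replicate n c) = ∏ i ∈ range n, linf (c * X^(a+i)) := by
  intro n
  induction n with
  | zero => intro a; simp [PRD]
  | succ n ih =>
    intro a
    rw [List.replicate_succ]
    show linf (c * X^a) * PRD (a+1) (List.replicate n c) = _
    rw [ih (a+1), prod_range_succ', Nat.add_zero, mul_comm]
    refine congrArg₂ (· * ·) ?_ (by rw [Nat.add_zero])
    exact Finset.prod_congr rfl fun i _ => by rw [show a + (i+1) = a+1+i from by omega]

lemma CCD_eq (ν : ℝ) (j n : ℕ) :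
    CCp j * DDp ν j n = PRD 0 (List.replicate j (1:Rq) ++ List.replicate n (C ν)) := by
  rw [PRD_split, List.length_replicate, PRD_replicate, PRD_replicate]
  refine congrArg₂ (· * ·) ?_ ?_
  · exact Finset.prod_congr rfl fun i _ => by rw [one_mul, Nat.zero_add]
  · exact Finset.prod_congr rfl fun i _ => by rw [Nat.zero_add]

lemma QQ_eq (μ : ℝ) (m : ℕ) : QQp μ m = PRD 0 (List.replicate m (C μ)) := by
  rw [PRD_replicate]
  exact Finset.prod_congr rfl fun i _ => by rw [Nat.zero_add]

/-- coefficient-extracted, X-power-cancelled form of thm1, in R = ℝ[q] -/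
theorem cwp (μ ν : ℝ) (m k : ℕ) :
    ∑ j ∈ range (m+1), qbp m j * aa μ ν j * bb μ (m-j)
        * wseq (List.replicate j (1:Rq) ++ List.replicate (m-j) (C ν)) k
      = bb ν m * wseq (List.replicate m (C μ)) k := by
  have h := congrArg (fun p : Aq => p.coeff k) (thm1 μ ν m)
  simp only [finset_sum_coeff, coeff_C_mul] at h
  have hL : ∀ j, (CCp j * DDp ν j (m-j)).coeff k
      = X^(Nat.choose k 2) * wseq (List.replicate j (1:Rq) ++ List.replicate (m-j) (C ν)) k := by
    intro j; rw [CCD_eq, bridge]; norm_num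
  have hR : (QQp μ m).coeff k = X^(Nat.choose k 2) * wseq (List.replicate m (C μ)) k := by
    rw [QQ_eq, bridge]; norm_num
  rw [hR] at h
  have h3 : ∑ j ∈ range (m+1), qbp m j * aa μ ν j * bb μ (m-j) * ((CCp j * DDp ν j (m-j)).coeff k)
      = X^(Nat.choose k 2) * ∑ j ∈ range (m+1), qbp m j * aa μ ν j * bb μ (m-j)
          * wseq (List.replicate j (1:Rq) ++ List.replicate (m-j) (C ν)) k := by
    rw [Finset.mul_sum]
    exact Finset.sum_congr rfl fun j _ => by rw [hL j]; ring
  rw [h3] at h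
  rw [show bb ν m * (X^(Nat.choose k 2) * wseq (List.replicate m (C μ)) k)
      = X^(Nat.choose k 2) * (bb ν m * wseq (List.replicate m (C μ)) k) from by ring] at h
  exact mul_left_cancel₀ (pow_ne_zero _ X_ne_zero) h

end S15bridge

noncomputable section S15real
open Polynomial Finset

def wseqR (q : ℝ) : List ℝ → ℕ → ℝ
  | [], 0 => 1
  | [], _+1 => 0
  | _::xs, 0 => wseqR q xs 0
  | x::xs, k+1 => x * wseqR q xs k + q^(k+1) * wseqR q xs (k+1)

lemma eval_wseq (q : ℝ) : ∀ (xs : List Rq) (k : ℕ),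
    eval q (wseq xs k) = wseqR q (xs.map (eval q)) k := by
  intro xs
  induction xs with
  | nil => intro k; rcases k with _|k <;> simp [wseq, wseqR]
  | cons x xs ih =>
    intro k
    rcases k with _|k
    · show eval q (wseq xs 0) = wseqR q (eval q x :: xs.map (eval q)) 0
      rw [show wseqR q (eval q x :: xs.map (eval q)) 0 = wseqR q (xs.map (eval q)) 0 from rfl]
      exact ih 0
    · show eval q (x * wseq xs k + X^(k+1) * wseq xs (k+1)) = _
      rw [List.map_cons]
      rw [show wseqR q (eval q x :: xs.map (eval q)) (k+1)
          = eval q x * wseqR q (xs.map (eval q)) k + q^(k+1) * wseqR q (xs.map (eval q)) (k+1) from rfl]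
      simp [ih k, ih (k+1)]

/-- real-evaluated coefficient identity, valid for ALL real q -/
theorem cwR (q μ ν : ℝ) (m k : ℕ) :
    ∑ j ∈ range (m+1), eval q (qbp m j) * (∏ i ∈ range j, (μ - ν * q^i)) * qpR μ q (m-j)
        * wseqR q (List.replicate j (1:ℝ) ++ List.replicate (m-j) ν) k
      = qpR ν q m * wseqR q (List.replicate m μ) k := by
  have eval_aa : ∀ j, eval q (aa μ ν j) = ∏ i ∈ range j, (μ - ν * q^i) := by
    intro j
    rw [aa, eval_prod]
    exact Finset.prod_congr rfl fun i _ => by simp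
  have eval_bb : ∀ (a : ℝ) (n : ℕ), eval q (bb a n) = qpR a q n := by
    intro a n
    rw [bb, eval_prod, qpR]
    exact Finset.prod_congr rfl fun i _ => by simp
  have h := congrArg (eval q) (cwp μ ν m k)
  rw [eval_finset_sum] at h
  simp only [eval_mul, eval_aa, eval_bb, eval_wseq, List.map_append, List.map_replicate,
    eval_C, eval_one] at h
  exact h

end S15real

noncomputable section S15phi
open Polynomial Finset

lemma qpR_succ (a q : ℝ) (n : ℕ) : qpR a q (n+1) = qpR a q n * (1 - a * q^n) := prod_range_succ _ _

lemma gauss (q : ℝ) : ∀ m j : ℕ, j ≤ m →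
    eval q (qbp m j) * (qpR q q j * qpR q q (m-j)) = qpR q q m := by
  intro m
  induction m with
  | zero =>
    intro j hj
    interval_cases j
    simp [qpR]
  | succ m ih =>
    intro j hj
    rcases j with _|j
    · simp [qpR]
    · rcases Nat.lt_or_ge j m with hlt | hge
      · obtain ⟨d, hd⟩ : ∃ d, m = j + 1 + d := ⟨m - (j+1), by omega⟩
        subst hd
        have e1 : j + 1 + d + 1 - (j+1) = d+1 := by omega
        have e2 : j + 1 + d - (j+1) = d := by omega
        have e3 : j + 1 + d - j = d+1 := by omega
        have ih1 := ih j (by omega)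
        have ih2 := ih (j+1) (by omega)
        rw [e3] at ih1; rw [e2] at ih2
        rw [e1]
        rw [show qbp (j+1+d+1) (j+1) = qbp (j+1+d) j + X^(j+1) * qbp (j+1+d) (j+1) from rfl]
        rw [qpR_succ q q (j+1+d), qpR_succ q q j, qpR_succ q q d]
        rw [qpR_succ q q d] at ih1
        rw [qpR_succ q q j] at ih2
        simp only [eval_add, eval_mul, eval_pow, eval_X]
        linear_combination (1 - q*q^j) * ih1 + q^(j+1) * (1 - q*q^d) * ih2
      · have hjm : j = m := by omega
        subst hjm
        simp [qpR]
end S15phi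

noncomputable section S15phi2
open Polynomial Finset

lemma qpR_q_ne (q : ℝ) (hq : |q| < 1) (n : ℕ) : qpR q q n ≠ 0 := by
  rw [qpR]
  refine Finset.prod_ne_zero_iff.mpr fun i _ => ?_
  intro h
  have h1 : q * q^i = 1 := by linarith [sub_eq_zero.mp h]
  have h2 : |q * q^i| < 1 := by
    rw [abs_mul, abs_pow]
    calc |q| * |q|^i ≤ |q| * 1 := by
          refine mul_le_mul_of_nonneg_left ?_ (abs_nonneg q)
          exact pow_le_one₀ (abs_nonneg q) hq.le
      _ < 1 := by linarith
  rw [h1] at h2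
  simp at h2

lemma qpR_lt_ne (q ν : ℝ) (hq : |q| < 1) (hν : 0 ≤ ν) (hν1 : ν < 1) (n : ℕ) : qpR ν q n ≠ 0 := by
  rw [qpR]
  refine Finset.prod_ne_zero_iff.mpr fun i _ => ?_
  intro h
  have h1 : ν * q^i = 1 := by linarith [sub_eq_zero.mp h]
  have h2 : |ν * q^i| < 1 := by
    rw [abs_mul, abs_pow, abs_of_nonneg hν]
    calc ν * |q|^i ≤ ν * 1 := by
          refine mul_le_mul_of_nonneg_left ?_ hν
          exact pow_le_one₀ (abs_nonneg q) hq.le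
      _ < 1 := by linarith
  rw [h1] at h2
  simp at h2

lemma philink (q μ ν : ℝ) (hq : |q| < 1) (hν : 0 ≤ ν) (hν1 : ν < 1) (hμ0 : 0 < μ)
    (m j : ℕ) (hj : j ≤ m) :
    phi q μ ν j m * qpR ν q m
      = eval q (qbp m j) * (∏ i ∈ range j, (μ - ν * q^i)) * qpR μ q (m-j) := by
  have haa : μ^j * qpR (ν/μ) q j = ∏ i ∈ range j, (μ - ν * q^i) := by
    rw [qpR, show μ^j = ∏ _i ∈ range j, μ from by rw [prod_const, card_range], ← prod_mul_distrib]
    refine Finset.prod_congr rfl fun i _ => ?_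
    field_simp
  have hg := gauss q m j hj
  have hD : qpR ν q m * qpR q q j * qpR q q (m-j) ≠ 0 :=
    mul_ne_zero (mul_ne_zero (qpR_lt_ne q ν hq hν hν1 m) (qpR_q_ne q hq j)) (qpR_q_ne q hq (m-j))
  rw [phi, div_mul_eq_mul_div, div_eq_iff hD, ← haa]
  linear_combination (-(μ^j * qpR (ν/μ) q j * qpR μ q (m-j) * qpR ν q m)) * hg

/-- the scalar identity with phi coefficients -/
theorem cwPhi (q μ ν : ℝ) (hq : |q| < 1) (hν : 0 ≤ ν) (hν1 : ν < 1) (hμ0 : 0 < μ)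
    (m k : ℕ) :
    ∑ j ∈ range (m+1), phi q μ ν j m
        * wseqR q (List.replicate j (1:ℝ) ++ List.replicate (m-j) ν) k
      = wseqR q (List.replicate m μ) k := by
  have hnu := qpR_lt_ne q ν hq hν hν1 m
  refine mul_left_cancel₀ hnu ?_
  rw [Finset.mul_sum]
  rw [← cwR q μ ν m k]
  refine Finset.sum_congr rfl fun j hj => ?_
  have hj' : j ≤ m := by simpa [Nat.lt_succ_iff] using hj
  rw [show qpR ν q m * (phi q μ ν j m * wseqR q (List.replicate j (1:ℝ) ++ List.replicate (m-j) ν) k)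
      = (phi q μ ν j m * qpR ν q m) * wseqR q (List.replicate j (1:ℝ) ++ List.replicate (m-j) ν) k from by ring,
    philink q μ ν hq hν hν1 hμ0 m j hj']

end S15phi2

section S15alg
open Finset

variable {S : Type*} [Ring S] [Algebra ℝ S] (q : ℝ) (U W : S)

lemma wseqR_supp (q : ℝ) : ∀ (xs : List ℝ) (k : ℕ), xs.length < k → wseqR q xs k = 0 := by
  intro xs
  induction xs with
  | nil => intro k hk; match k, hk with | (k+1), _ => rfl
  | cons x xs ih =>
    intro k hk
    match k, hk with
    | (k+1), hk =>
      show x * wseqR q xs k + q^(k+1) * wseqR q xs (k+1) = 0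
      have h1 : xs.length < k := by simpa using hk
      rw [ih k h1, ih (k+1) (by omega), mul_zero, mul_zero, add_zero]

variable (hUW : W * U = q • (U * W))
include hUW

lemma slide (n : ℕ) : W * U^n = q^n • (U^n * W) := by
  induction n with
  | zero => simp
  | succ n ih =>
    rw [pow_succ', ← mul_assoc, hUW, smul_mul_assoc, mul_assoc, ih, mul_smul_comm, smul_smul,
      pow_succ', ← mul_assoc]

lemma key_word : ∀ (xs : List ℝ),
    (xs.map (fun x => x • U + W)).prod
      = ∑ k ∈ range (xs.length + 1), wseqR q xs k • (U^k * W^(xs.length - k)) := by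
  intro xs
  induction xs with
  | nil => simp [wseqR]
  | cons x xs ih =>
    set n := xs.length with hn
    set c := wseqR q xs with hc
    rw [List.map_cons, List.prod_cons, ih, Finset.mul_sum]
    have per : ∀ k ∈ range (n+1), (x • U + W) * (c k • (U^k * W^(n-k)))
        = (x * c k) • (U^(k+1) * W^(n-k)) + (q^k * c k) • (U^k * W^(n-k+1)) := by
      intro k hk
      rw [add_mul, mul_smul_comm, mul_smul_comm, smul_mul_assoc, smul_smul]
      rw [← mul_assoc (W) (U^k) (W^(n-k)), slide q U W hUW k, smul_mul_assoc, smul_smul]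
      rw [← mul_assoc U (U^k) _, ← pow_succ' U k, mul_assoc (U^k) W (W^(n-k)), ← pow_succ' W (n-k)]
      rw [mul_comm (q^k) (c k)]
      congr 2
      ring
    rw [Finset.sum_congr rfl per, Finset.sum_add_distrib]
    show _ = ∑ k ∈ range (n+1+1), wseqR q (x :: xs) k • (U ^ k * W ^ (n+1 - k))
    rw [Finset.sum_range_succ' (fun k => wseqR q (x :: xs) k • (U ^ k * W ^ (n+1 - k)))]
    have hw0 : wseqR q (x :: xs) 0 = c 0 := rfl
    have hwS : ∀ k, wseqR q (x :: xs) (k+1) = x * c k + q^(k+1) * c (k+1) := fun k => rfl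
    rw [hw0]
    have target_split : ∑ k ∈ range (n+1), wseqR q (x :: xs) (k+1) • (U^(k+1) * W^(n+1-(k+1)))
        = ∑ k ∈ range (n+1), ((x * c k) • (U^(k+1) * W^(n-k))
            + (q^(k+1) * c (k+1)) • (U^(k+1) * W^(n-k))) := by
      refine Finset.sum_congr rfl fun k hk => ?_
      rw [hwS k, show n+1-(k+1) = n-k from by omega, add_smul]
    rw [target_split, Finset.sum_add_distrib, add_assoc]
    congr 1
    -- remaining: ∑ (q^k c k)•U^k W^(n-k+1) = ∑ (q^(k+1) c(k+1))•U^(k+1)W^(n-k) + c 0 • (U^0 * W^(n+1-0))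
    rw [Finset.sum_range_succ (fun k => (q^(k+1) * c (k+1)) • (U^(k+1) * W^(n-k)))]
    rw [show c (n+1) = 0 from wseqR_supp q xs (n+1) (Nat.lt_succ_self n), mul_zero, zero_smul,
      add_zero]
    rw [Finset.sum_range_succ' (fun k => (q^k * c k) • (U^k * W^(n-k+1)))]
    congr 1
    · refine Finset.sum_congr rfl fun k hk => ?_
      rw [show n - (k+1) + 1 = n - k from by
        have : k < n := by simpa using hk
        omega]
    · rw [pow_zero, one_mul, Nat.sub_zero, pow_zero, Nat.sub_zero, one_mul]

end S15alg

open Finset in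
theorem stmt15 {S : Type*} [Ring S] [Algebra ℝ S]
    (q μ ν : ℝ) (hq : |q| < 1) (hν : 0 ≤ ν) (hνμ : ν ≤ μ) (hμ0 : 0 < μ) (hμ : μ < 1)
    (hqν : q * ν ≠ 1) (hν1 : ν ≠ 1)
    (A B : S)
    (hAB : B * A = (ν * (1 - q) / (1 - q * ν)) • (A * A)
        + ((q - ν) / (1 - q * ν)) • (A * B) + ((1 - q) / (1 - q * ν)) • (B * B))
    (m : ℕ) :
    (((μ - ν) / (1 - ν)) • A + ((1 - μ) / (1 - ν)) • B) ^ m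
      = ∑ j ∈ Finset.range (m + 1), phi q μ ν j m • (A ^ j * B ^ (m - j)) := by
  have hν1' : ν < 1 := lt_of_le_of_lt hνμ hμ
  have h1ν : (1:ℝ) - ν ≠ 0 := sub_ne_zero.mpr (Ne.symm (ne_of_lt hν1'))
  have h1qν : (1:ℝ) - q * ν ≠ 0 := sub_ne_zero.mpr (Ne.symm hqν)
  have hUW : (B - ν • A) * (A - B) = q • ((A - B) * (B - ν • A)) := by
    have hAB' : (1 - q * ν) • (B * A) = (ν * (1 - q)) • (A * A) + (q - ν) • (A * B)
        + (1 - q) • (B * B) := by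
      rw [hAB]
      simp only [smul_add, smul_smul]
      rw [show (1 - q*ν) * (ν * (1 - q) / (1 - q * ν)) = ν * (1-q) from by field_simp,
        show (1 - q*ν) * ((q - ν) / (1 - q * ν)) = q - ν from by field_simp,
        show (1 - q*ν) * ((1 - q) / (1 - q * ν)) = 1 - q from by field_simp]
    have expand : (B - ν • A) * (A - B) - q • ((A - B) * (B - ν • A))
        = (1 - q * ν) • (B * A) - ((ν * (1 - q)) • (A * A) + (q - ν) • (A * B)
            + (1 - q) • (B * B)) := by
      simp only [sub_mul, mul_sub, smul_mul_assoc, mul_smul_comm, smul_sub, smul_add, smul_smul]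
      match_scalars <;> ring
    have : (B - ν • A) * (A - B) - q • ((A - B) * (B - ν • A)) = 0 := by
      rw [expand, hAB', sub_self]
    exact sub_eq_zero.mp this
  have hkey := key_word q (A - B) (B - ν • A) hUW
  have hlst : ∀ j, j ≤ m → (List.replicate j (1:ℝ) ++ List.replicate (m-j) ν).length = m := by
    intro j hj; simp; omega
  have hC : ((μ - ν)/(1-ν)) • A + ((1-μ)/(1-ν)) • B
      = ((1-ν)⁻¹) • (μ • (A-B) + (B - ν•A)) := by
    match_scalars <;> field_simp <;> ring
  have hA : A = ((1-ν)⁻¹) • ((1:ℝ) • (A-B) + (B - ν•A)) := by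
    match_scalars <;> field_simp <;> ring
  have hB : B = ((1-ν)⁻¹) • (ν • (A-B) + (B - ν•A)) := by
    match_scalars <;> field_simp <;> ring
  -- LHS
  have hLHS : (((μ - ν) / (1 - ν)) • A + ((1 - μ) / (1 - ν)) • B) ^ m
      = ((1-ν)⁻¹)^m • ∑ k ∈ range (m+1), wseqR q (List.replicate m μ) k
          • ((A-B)^k * (B - ν•A)^(m-k)) := by
    rw [hC, smul_pow]
    congr 1
    have h1 : (μ • (A-B) + (B - ν•A))^m
        = ((List.replicate m μ).map (fun y => y • (A-B) + (B - ν•A))).prod := by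
      rw [List.map_replicate, List.prod_replicate]
    rw [h1, hkey (List.replicate m μ), List.length_replicate]
  -- RHS terms
  have hRHS : ∀ j ∈ range (m+1), A^j * B^(m-j)
      = ((1-ν)⁻¹)^m • ∑ k ∈ range (m+1),
          wseqR q (List.replicate j (1:ℝ) ++ List.replicate (m-j) ν) k
            • ((A-B)^k * (B - ν•A)^(m-k)) := by
    intro j hj
    have hj' : j ≤ m := by simpa [Nat.lt_succ_iff] using hj
    have hAj : ∀ n:ℕ, A^n = (((1-ν)⁻¹)^n) • (((1:ℝ) • (A-B) + (B - ν•A))^n) := fun n => by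
      rw [← smul_pow, ← hA]
    have hBj : ∀ n:ℕ, B^n = (((1-ν)⁻¹)^n) • ((ν • (A-B) + (B - ν•A))^n) := fun n => by
      rw [← smul_pow, ← hB]
    have e1 : A^j * B^(m-j)
        = (((1-ν)⁻¹)^j * ((1-ν)⁻¹)^(m-j)) • ((((1:ℝ) • (A-B) + (B - ν•A))^j)
            * ((ν • (A-B) + (B - ν•A))^(m-j))) := by
      rw [hAj j, hBj (m-j), smul_mul_smul_comm]
    rw [e1, ← pow_add, Nat.add_sub_cancel' hj']
    congr 1
    have h2 : (((1:ℝ) • (A-B) + (B - ν•A))^j) * ((ν • (A-B) + (B - ν•A))^(m-j))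
        = ((List.replicate j (1:ℝ) ++ List.replicate (m-j) ν).map
            (fun y => y • (A-B) + (B - ν•A))).prod := by
      rw [List.map_append, List.prod_append, List.map_replicate, List.prod_replicate,
        List.map_replicate, List.prod_replicate]
    rw [h2, hkey, hlst j hj']
  rw [hLHS]
  rw [show (∑ j ∈ Finset.range (m+1), phi q μ ν j m • (A^j * B^(m-j)))
      = ∑ j ∈ range (m+1), phi q μ ν j m • (((1-ν)⁻¹)^m • ∑ k ∈ range (m+1),
          wseqR q (List.replicate j (1:ℝ) ++ List.replicate (m-j) ν) k
            • ((A-B)^k * (B - ν•A)^(m-k))) from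
    Finset.sum_congr rfl fun j hj => by rw [hRHS j hj]]
  have swap : ∑ j ∈ range (m+1), phi q μ ν j m • (((1-ν)⁻¹)^m • ∑ k ∈ range (m+1),
        wseqR q (List.replicate j (1:ℝ) ++ List.replicate (m-j) ν) k
          • ((A-B)^k * (B - ν•A)^(m-k)))
      = ((1-ν)⁻¹)^m • ∑ k ∈ range (m+1), (∑ j ∈ range (m+1), phi q μ ν j m
          * wseqR q (List.replicate j (1:ℝ) ++ List.replicate (m-j) ν) k)
            • ((A-B)^k * (B - ν•A)^(m-k)) := by
    rw [Finset.smul_sum]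
    rw [show (∑ j ∈ range (m+1), phi q μ ν j m • (((1-ν)⁻¹)^m • ∑ k ∈ range (m+1),
        wseqR q (List.replicate j (1:ℝ) ++ List.replicate (m-j) ν) k
          • ((A-B)^k * (B - ν•A)^(m-k))))
        = ∑ j ∈ range (m+1), ((1-ν)⁻¹)^m • ∑ k ∈ range (m+1),
            (phi q μ ν j m * wseqR q (List.replicate j (1:ℝ) ++ List.replicate (m-j) ν) k)
              • ((A-B)^k * (B - ν•A)^(m-k)) from
      Finset.sum_congr rfl fun j _ => by
        rw [smul_comm]
        congr 1
        rw [Finset.smul_sum]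
        exact Finset.sum_congr rfl fun k _ => smul_smul _ _ _]
    rw [← Finset.smul_sum, ← Finset.smul_sum]
    congr 1
    rw [Finset.sum_comm]
    exact Finset.sum_congr rfl fun k _ => (Finset.sum_smul).symm
  rw [swap]
  congr 1
  refine Finset.sum_congr rfl fun k _ => ?_
  rw [cwPhi q μ ν hq hν hν1' hμ0 m k]
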